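/- With S_{q,d,k} as above, for every fixed d there exists K such that for all k ≥ K and all q ≤ k, S_{q,k−d,k} ≤ 2^{−k}. -/

import Mathlib

noncomputable def ddf (n : ℕ) : ℝ := ((2 * n).factorial : ℝ) / (2 ^ n * n.factorial)

noncomputable def Sqdk (q d k : ℕ) : ℝ :=
  (∑ c ∈ (Finset.Nat.antidiagonalTuple q k).filter fun c => ∀ j, c j ≤ k - d,
      ∏ j, ddf (c j)) / ddf k

lemma ddf_zero : ddf 0 = 1 := by simp [ddf]

lemma ddf_succ (n : ℕ) : ddf (n + 1) = (2 * n + 1) * ddf n := by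
  have h1 : 2 * (n + 1) = (2 * n + 1) + 1 := by ring
  rw [ddf, ddf, h1, Nat.factorial_succ, Nat.factorial_succ, Nat.factorial_succ]
  have h2 : (0:ℝ) < (2:ℝ)^n := by positivity
  have h3 : (0:ℝ) < (n.factorial : ℝ) := by positivity
 
  field_simp
  push_cast
  ring

lemma ddf_pos (n : ℕ) : 0 < ddf n := by
  induction n with
  | zero => simp [ddf_zero]
  | succ n ih => rw [ddf_succ]; positivity

lemma factorial_le_ddf (n : ℕ) : (n.factorial : ℝ) ≤ ddf n := by
  induction n with
  | zero => simp [ddf_zero]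
  | succ n ih =>
    rw [ddf_succ, Nat.factorial_succ]
    push_cast
    have h1 : (n:ℝ) + 1 ≤ 2 * n + 1 := by push_cast; linarith
    have := (ddf_pos n).le
    have h2 : (0:ℝ) ≤ (n.factorial : ℝ) := by positivity
    nlinarith [Nat.one_le_iff_ne_zero.2 n.factorial_ne_zero,
      (Nat.one_le_cast (α := ℝ)).2 (Nat.one_le_iff_ne_zero.2 n.factorial_ne_zero)]

lemma ddf_le (d m : ℕ) (h : m ≤ d) : ddf m ≤ (2 * (d:ℝ) + 2) ^ m := by
  induction m with
  | zero => simp [ddf_zero]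
  | succ m ih =>
    rw [ddf_succ, pow_succ]
    have hm : m ≤ d := Nat.le_of_succ_le h
    have h1 : (2 * (m:ℝ) + 1) ≤ 2 * d + 2 := by
      have : (m:ℝ) ≤ d := Nat.cast_le.2 hm
      linarith
    have := ddf_pos m
    calc (2 * (m:ℝ) + 1) * ddf m ≤ (2 * d + 2) * ddf m := by nlinarith
      _ ≤ (2 * d + 2) * (2 * (d:ℝ) + 2) ^ m := by
          have : (0:ℝ) ≤ 2 * d + 2 := by positivity
          nlinarith [ih hm]
      _ = (2 * (d:ℝ) + 2) ^ m * (2 * d + 2) := by ring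

/-- For every fixed `d` there is `K` such that for all `k ≥ K` and all `q ≤ k`,
`S_{q,k-d,k} ≤ 2^{-k}`. -/
theorem Sqdk_kd_le_two_pow_neg (d : ℕ) :
    ∃ K : ℕ, ∀ k : ℕ, K ≤ k → ∀ q : ℕ, q ≤ k → Sqdk q (k - d) k ≤ ((2 : ℝ) ^ k)⁻¹ := by
  set x : ℝ := 2 * ((d:ℝ) + 1) * (2 * d + 2) with hx
  have hx0 : 0 ≤ x := by positivity
  have htend := FloorSemiring.tendsto_pow_div_factorial_atTop x
  have hev : ∀ᶠ k in Filter.atTop, x ^ k / (k.factorial : ℝ) ≤ 1 := by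
    filter_upwards [htend.eventually (gt_mem_nhds (zero_lt_one))] with k hk
    exact le_of_lt hk
  obtain ⟨K0, hK0⟩ := Filter.eventually_atTop.1 hev
  refine ⟨max K0 d, fun k hk q hq => ?_⟩
  have hkd : d ≤ k := le_trans (le_max_right _ _) hk
  have hK0k : K0 ≤ k := le_trans (le_max_left _ _) hk
  have hsub : k - (k - d) = d := by omega
  -- bound the sum
  set F := (Finset.Nat.antidiagonalTuple q k).filter fun c => ∀ j, c j ≤ k - (k - d)
  have hterm : ∀ c ∈ F, (∏ j, ddf (c j)) ≤ (2 * (d:ℝ) + 2) ^ k := by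
    intro c hc
    rw [Finset.mem_filter, Finset.Nat.mem_antidiagonalTuple] at hc
    obtain ⟨hsum, hle⟩ := hc
    calc (∏ j, ddf (c j)) ≤ ∏ j, (2 * (d:ℝ) + 2) ^ (c j) := by
          apply Finset.prod_le_prod
          · intro j _; exact (ddf_pos _).le
          · intro j _; exact ddf_le d (c j) (by rw [← hsub]; exact hle j)
      _ = (2 * (d:ℝ) + 2) ^ (∑ j, c j) := by rw [← Finset.prod_pow_eq_pow_sum]
      _ = (2 * (d:ℝ) + 2) ^ k := by rw [hsum]
  have hcard : F.card ≤ (d + 1) ^ k := by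
    have h1 : F.card ≤ (d + 1) ^ q := by
      have : F.card ≤ Fintype.card (Fin q → Fin (d + 1)) := by
        apply Finset.card_le_card_of_injOn
          (fun c j => (⟨min (c j) d, by omega⟩ : Fin (d + 1)))
        · intro c hc; exact Finset.mem_univ _
        · intro a ha b hb hab
          have ha' := (Finset.mem_filter.1 ha).2
          have hb' := (Finset.mem_filter.1 hb).2
          funext j
          have h := congrArg Fin.val (congrFun hab j)
          simp only at h
          have haj := ha' j; have hbj := hb' j
          rw [hsub] at haj hbj
          omega
      simpa [Fintype.card_fun] using this
    calc F.card ≤ (d + 1) ^ q := h1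
      _ ≤ (d + 1) ^ k := Nat.pow_le_pow_right (Nat.succ_pos d) hq
  have hsumle : (∑ c ∈ F, ∏ j, ddf (c j)) ≤ ((d:ℝ) + 1) ^ k * (2 * d + 2) ^ k := by
    calc (∑ c ∈ F, ∏ j, ddf (c j)) ≤ F.card * (2 * (d:ℝ) + 2) ^ k :=
          by simpa [nsmul_eq_mul] using Finset.sum_le_card_nsmul F _ _ hterm
      _ ≤ ((d:ℝ) + 1) ^ k * (2 * d + 2) ^ k := by
          apply mul_le_mul_of_nonneg_right _ (by positivity)
          calc (F.card : ℝ) ≤ ((d + 1 : ℕ) ^ k : ℕ) := Nat.cast_le.2 hcard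
            _ = ((d:ℝ) + 1) ^ k := by push_cast; ring
  have hkfac : (k.factorial : ℝ) ≤ ddf k := factorial_le_ddf k
  have hddfk : 0 < ddf k := ddf_pos k
  have hxk := hK0 k hK0k
  have hfac0 : (0:ℝ) < (k.factorial : ℝ) := by positivity
  rw [div_le_one hfac0] at hxk
  have hxval : x ^ k = 2 ^ k * (((d:ℝ) + 1) ^ k * (2 * d + 2) ^ k) := by
    rw [hx]; rw [mul_pow, mul_pow]; ring
  have key : ((d:ℝ) + 1) ^ k * (2 * d + 2) ^ k * 2 ^ k ≤ ddf k := by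
    calc ((d:ℝ) + 1) ^ k * (2 * d + 2) ^ k * 2 ^ k = x ^ k := by rw [hxval]; ring
      _ ≤ (k.factorial : ℝ) := hxk
      _ ≤ ddf k := hkfac
  rw [Sqdk, div_le_iff₀ hddfk]
  calc (∑ c ∈ F, ∏ j, ddf (c j)) ≤ ((d:ℝ) + 1) ^ k * (2 * d + 2) ^ k := hsumle
    _ ≤ ((2:ℝ) ^ k)⁻¹ * ddf k := by
        have h2 : ((d:ℝ) + 1) ^ k * (2 * d + 2) ^ k ≤ ddf k / 2 ^ k :=
          (le_div_iff₀ (by positivity : (0:ℝ) < 2 ^ k)).2 key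
        calc ((d:ℝ) + 1) ^ k * (2 * d + 2) ^ k ≤ ddf k / 2 ^ k := h2
          _ = ((2:ℝ) ^ k)⁻¹ * ddf k := by rw [div_eq_mul_inv]; ring
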